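/- Let λ ∈ ℝ \ {0}, α ∈ ℝ, ε ∈ {1,−1}, C ∈ ℝ, and define on the open set {(y1,x2,y2) : sin(λ y2) ≠ 0} the function F(y1, x2, y2) = ε·y1·cot(λ y2) − C·exp(x2 + α ε y2)/sin(λ y2). Then F satisfies all three equations: (i) sin(λ y2)·∂F/∂y1 = ε·cos(λ y2); (ii) y1·∂F/∂y1 + ∂F/∂x2 − F = 0; (iii) F·∂F/∂y1 + (1/λ)(−α·∂F/∂x2 + ε·∂F/∂y2) + y1 = 0. -/

import Mathlib

/-- The function `F = ε y1 cot(λ y2) − C e^{x2+αεy2}/sin(λ y2)` satisfies the tangency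
system for the homogeneous hypersurfaces associated with `g_{5,35}`. -/
theorem stmt16 (lam α ε C : ℝ) (hlam : lam ≠ 0) (hε : ε = 1 ∨ ε = -1)
    (F : ℝ → ℝ → ℝ → ℝ)
    (hF : ∀ y1 x2 y2, F y1 x2 y2 =
        ε * y1 * (Real.cos (lam * y2) / Real.sin (lam * y2)) -
        C * Real.exp (x2 + α * ε * y2) / Real.sin (lam * y2)) :
    ∀ y1 x2 y2 : ℝ, Real.sin (lam * y2) ≠ 0 →
      (Real.sin (lam * y2) * deriv (fun s => F s x2 y2) y1 = ε * Real.cos (lam * y2)) ∧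
      (y1 * deriv (fun s => F s x2 y2) y1 + deriv (fun s => F y1 s y2) x2 - F y1 x2 y2 = 0) ∧
      (F y1 x2 y2 * deriv (fun s => F s x2 y2) y1 +
        (1 / lam) * (-α * deriv (fun s => F y1 s y2) x2 + ε * deriv (fun s => F y1 x2 s) y2) +
        y1 = 0) := by
  intro y1 x2 y2 hs
  have hε2 : ε * ε = 1 := by rcases hε with h | h <;> simp [h]
  set s := Real.sin (lam * y2) with hsdef
  set c := Real.cos (lam * y2) with hcdef
  set E := Real.exp (x2 + α * ε * y2) with hEdef
  -- derivative in y1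
  have h1 : deriv (fun t => F t x2 y2) y1 = ε * (c / s) := by
    have heq : (fun t => F t x2 y2) = fun t => ε * t * (c / s) - C * E / s := by
      funext t; exact hF t x2 y2
    rw [heq]
    have : HasDerivAt (fun t : ℝ => ε * t * (c / s) - C * E / s) (ε * (c / s)) y1 := by
      have h := (((hasDerivAt_id y1).const_mul ε).mul_const (c / s)).sub_const (C * E / s)
      simpa using h
    exact this.deriv
  -- derivative in x2
  have h2 : deriv (fun t => F y1 t y2) x2 = -(C * E / s) := by
    have heq : (fun t => F y1 t y2) = fun t => ε * y1 * (c / s) - C * Real.exp (t + α * ε * y2) / s := by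
      funext t; exact hF y1 t y2
    rw [heq]
    have hE : HasDerivAt (fun t : ℝ => Real.exp (t + α * ε * y2)) E x2 := by
      have h := ((hasDerivAt_id x2).add_const (α * ε * y2)).exp
      simpa [hEdef] using h
    have : HasDerivAt (fun t : ℝ => ε * y1 * (c / s) - C * Real.exp (t + α * ε * y2) / s)
        (-(C * E / s)) x2 := by
      have h := (hasDerivAt_const x2 (ε * y1 * (c / s))).sub (((hE.const_mul C)).div_const s)
      simpa [mul_div_assoc, Pi.sub_def] using h
    exact this.deriv
  -- derivative in y2
  have h3 : deriv (fun t => F y1 x2 t) y2 =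
      ε * y1 * (((-(s * lam)) * s - c * (c * lam)) / (s ^ 2)) -
        C * ((E * (α * ε) * s - E * (c * lam)) / (s ^ 2)) := by
    have heq : (fun t => F y1 x2 t) = fun t =>
        ε * y1 * (Real.cos (lam * t) / Real.sin (lam * t)) -
        C * (Real.exp (x2 + α * ε * t) / Real.sin (lam * t)) := by
      funext t; rw [hF y1 x2 t]; ring
    rw [heq]
    have hsin : HasDerivAt (fun t : ℝ => Real.sin (lam * t)) (c * lam) y2 := by
      have h := ((hasDerivAt_id y2).const_mul lam).sin
      simpa [hcdef, mul_comm] using h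
    have hcos : HasDerivAt (fun t : ℝ => Real.cos (lam * t)) (-(s * lam)) y2 := by
      have h := ((hasDerivAt_id y2).const_mul lam).cos
      simpa [hsdef, mul_comm] using h
    have hexp : HasDerivAt (fun t : ℝ => Real.exp (x2 + α * ε * t)) (E * (α * ε)) y2 := by
      have h := (((hasDerivAt_id y2).const_mul (α * ε)).const_add x2).exp
      simpa [hEdef, mul_comm] using h
    have hcot : HasDerivAt (fun t : ℝ => Real.cos (lam * t) / Real.sin (lam * t))
        (((-(s * lam)) * s - c * (c * lam)) / (s ^ 2)) y2 := hcos.div hsin hs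
    have hq : HasDerivAt (fun t : ℝ => Real.exp (x2 + α * ε * t) / Real.sin (lam * t))
        ((E * (α * ε) * s - E * (c * lam)) / (s ^ 2)) y2 := hexp.div hsin hs
    exact ((hcot.const_mul (ε * y1)).sub (hq.const_mul C)).deriv
  have hpy : s ^ 2 + c ^ 2 = 1 := Real.sin_sq_add_cos_sq (lam * y2)
  refine ⟨?_, ?_, ?_⟩
  · rw [h1]; field_simp
  · rw [h1, h2, hF y1 x2 y2]; ring
  · rw [h1, h2, h3, hF y1 x2 y2, ← hEdef, ← hsdef, ← hcdef]
    field_simp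
    rcases hε with h | h <;> subst h <;> ring_nf
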